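/- In the prisoner's dilemma with payoffs u(c,c)=1, u(c,d)=−l, u(d,c)=1+g, u(d,d)=0 where 0 < g, l < 1/(k−1) and k ≥ 2: if a player samples action c against k opponents of whom j cooperate, and samples d against k opponents of whom j' cooperate, then the total c-sample payoff j − (k−j)l exceeds the total d-sample payoff j'(1+g) if and only if j > j'. -/
import Mathlib


/-- In the PD with 0 < g, l < 1/(k-1), the total c-sample payoff j - (k-j)l exceeds
    the total d-sample payoff j'(1+g) iff j > j'. -/
theorem stmt_15 (k : ℕ) (hk : 2 ≤ k) (g l : ℝ)
    (hg0 : 0 < g) (hg : g < 1 / ((k : ℝ) - 1))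
    (hl0 : 0 < l) (hl : l < 1 / ((k : ℝ) - 1))
    (j j' : ℕ) (hj : j ≤ k) (hj' : j' ≤ k) :
    (j : ℝ) - ((k : ℝ) - (j : ℝ)) * l > (j' : ℝ) * (1 + g) ↔ j' < j := by
  have hK1 : (1 : ℝ) ≤ (k : ℝ) - 1 := by
    have : (2 : ℝ) ≤ (k : ℝ) := by exact_mod_cast hk
    linarith
  have hKpos : (0 : ℝ) < (k : ℝ) - 1 := by linarith
  have hg' : g * ((k : ℝ) - 1) < 1 := by
    rw [lt_div_iff₀ hKpos] at hg; linarith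
  have hl' : l * ((k : ℝ) - 1) < 1 := by
    rw [lt_div_iff₀ hKpos] at hl; linarith
  have hjk : (j : ℝ) ≤ (k : ℝ) := by exact_mod_cast hj
  have hj'k : (j' : ℝ) ≤ (k : ℝ) := by exact_mod_cast hj'
  have hj'0 : (0 : ℝ) ≤ (j' : ℝ) := by positivity
  constructor
  · intro h
    by_contra hle
    push_neg at hle
    have : (j : ℝ) ≤ (j' : ℝ) := by exact_mod_cast hle
    nlinarith [mul_nonneg (sub_nonneg.mpr hjk) hl0.le, mul_nonneg hj'0 hg0.le]
  · intro h
    have h1 : (j' : ℝ) + 1 ≤ (j : ℝ) := by exact_mod_cast h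
    rcases eq_or_lt_of_le hj with hjk' | hjk'
    · subst hjk'
      nlinarith [hg', mul_nonneg hj'0 hg0.le,
        mul_le_mul_of_nonneg_right (show (j' : ℝ) ≤ (j : ℝ) - 1 by linarith)
          (show (0 : ℝ) ≤ 1 + g by linarith)]
    · have hkj : (0 : ℝ) < (k : ℝ) - (j : ℝ) := by
        have : (j : ℝ) + 1 ≤ (k : ℝ) := by exact_mod_cast hjk'
        linarith
      nlinarith [mul_lt_mul_of_pos_left hl' hkj,
        mul_le_mul_of_nonneg_left hg'.le (show (0 : ℝ) ≤ (j : ℝ) - 1 by linarith),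
        mul_le_mul_of_nonneg_right (show (j' : ℝ) ≤ (j : ℝ) - 1 by linarith) hg0.le,
        mul_nonneg hj'0 hg0.le]
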